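/- arXiv:math/0305211 — 2 statements merged into one kernel-verified Lean document; each statement's English description precedes it below -/
import Mathlib

section
/- Let H₁ and H₂ be complex Hilbert spaces, F : H₁ → H₂ a linear, closed, densely defined operator, and C > 0 a fixed constant. Then the estimate ‖u‖ ≤ C‖Fu‖ holds for all u ∈ Dom(F) ∩ closure(Range(F*)) if and only if the estimate ‖v‖ ≤ C‖F*v‖ holds for all v ∈ Dom(F*) ∩ closure(Range(F)). In particular, the best constants in the two estimates are the same. -/
open LinearPMap

local notation "⟪" x ", " y "⟫" => @inner ℂ _ _ x y

section Aux
variable {H₁ H₂ : Type*} [NormedAddCommGroup H₁] [InnerProductSpace ℂ H₁]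
    [NormedAddCommGroup H₂] [InnerProductSpace ℂ H₂] [CompleteSpace H₁] [CompleteSpace H₂]


-- closure pairing lemma
lemma closure_pairing {H : Type*} [NormedAddCommGroup H] [InnerProductSpace ℂ H]
    (S : Set H) (v : H) (hv : v ∈ closure S) (M : ℝ) (hM : 0 ≤ M)
    (h : ∀ w ∈ S, RCLike.re (⟪v, w⟫) ≤ M * ‖w‖) : ‖v‖ ≤ M := by
  have hT : IsClosed {w : H | RCLike.re (⟪v, w⟫) ≤ M * ‖w‖} := by
    apply isClosed_le
    · exact (RCLike.continuous_re).comp (continuous_const.inner continuous_id)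
    · exact continuous_const.mul continuous_norm
  have hvT : v ∈ {w : H | RCLike.re (⟪v, w⟫) ≤ M * ‖w‖} :=
    closure_minimal h hT hv
  have h2 : ‖v‖ ^ 2 ≤ M * ‖v‖ := by
    rw [← inner_self_eq_norm_sq (𝕜 := ℂ)]
    exact hvT
  rcases eq_or_lt_of_le (norm_nonneg v) with h0 | h0
  · rw [← h0]; exact hM
  · nlinarith

-- easy kernel: (Range F)^⊥ ⊆ Ker F*
lemma easy_ker (F : H₁ →ₗ.[ℂ] H₂) (hdense : Dense (F.domain : Set H₁))
    (v : H₂) (hv : ∀ x : F.domain, ⟪v, F x⟫ = 0) :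
    ∃ h : v ∈ F.adjoint.domain, F.adjoint ⟨v, h⟩ = 0 := by
  have hmem : v ∈ F.adjoint.domain := by
    apply mem_adjoint_domain_of_exists
    exact ⟨0, fun x => by simp [hv x]⟩
  refine ⟨hmem, ?_⟩
  exact adjoint_apply_eq hdense ⟨v, hmem⟩ (fun x => by simp [hv x])

set_option linter.unusedSectionVars false

-- hard kernel: (Range F*)^⊥ ⊆ Ker F, needs F closed
lemma hard_ker (F : H₁ →ₗ.[ℂ] H₂) (hdense : Dense (F.domain : Set H₁))
    (hclosed : F.IsClosed) (u : H₁)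
    (hu : ∀ w ∈ LinearMap.range F.adjoint.toFun, ⟪w, u⟫ = 0) :
    ∃ h : u ∈ F.domain, F ⟨u, h⟩ = 0 := by
  set e : WithLp 2 (H₁ × H₂) ≃ₗ[ℂ] H₁ × H₂ := WithLp.linearEquiv 2 ℂ (H₁ × H₂) with he
  set G : Submodule ℂ (WithLp 2 (H₁ × H₂)) := F.graph.comap (e : WithLp 2 (H₁ × H₂) →ₗ[ℂ] H₁ × H₂) with hGdef
  have hGclosed : IsClosed (G : Set (WithLp 2 (H₁ × H₂))) := by
    have hc : Continuous (WithLp.equiv 2 (H₁ × H₂)) := WithLp.prod_continuous_ofLp 2 H₁ H₂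
    have : (G : Set (WithLp 2 (H₁ × H₂))) = (WithLp.equiv 2 (H₁ × H₂)) ⁻¹' (F.graph : Set (H₁ × H₂)) := rfl
    rw [this]
    exact hclosed.preimage hc
  haveI : CompleteSpace G := hGclosed.completeSpace_coe
  set z₀ : WithLp 2 (H₁ × H₂) := (WithLp.equiv 2 (H₁ × H₂)).symm (u, 0) with hz₀
  have hz₀G : z₀ ∈ G := by
    rw [← Submodule.orthogonal_orthogonal G]
    rw [Submodule.mem_orthogonal]
    intro w hw
    -- w ∈ Gᗮ; derive that w.snd ∈ Dom F* with F* w.snd = -w.fst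
    have hpair : ∀ x : F.domain, ⟪(x : H₁), w.fst⟫ + ⟪F x, w.snd⟫ = 0 := by
      intro x
      have hzx : (WithLp.equiv 2 (H₁ × H₂)).symm ((x : H₁), F x) ∈ G := by
        rw [hGdef, Submodule.mem_comap]
        have heq : (e : WithLp 2 (H₁ × H₂) →ₗ[ℂ] H₁ × H₂) ((WithLp.equiv 2 (H₁ × H₂)).symm ((x : H₁), F x)) = ((x : H₁), F x) := by
          simp [he]
        rw [heq]
        exact F.mem_graph x
      have := (Submodule.mem_orthogonal G w).mp hw _ hzx
      rwa [WithLp.prod_inner_apply] at this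
    have hpair' : ∀ x : F.domain, ⟪-w.fst, (x : H₁)⟫ = ⟪w.snd, F x⟫ := by
      intro x
      have h1 := hpair x
      have h2 : ⟪w.fst, (x : H₁)⟫ + ⟪w.snd, F x⟫ = 0 := by
        have := congrArg (starRingEnd ℂ) h1
        simpa [inner_conj_symm] using this
      rw [inner_neg_left]
      linear_combination -h2
    have hbmem : w.snd ∈ F.adjoint.domain :=
      mem_adjoint_domain_of_exists (T := F) w.snd ⟨-w.fst, hpair'⟩
    have hbval : F.adjoint ⟨w.snd, hbmem⟩ = -w.fst :=
      adjoint_apply_eq hdense ⟨w.snd, hbmem⟩ hpair'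
    have hfst : ⟪w.fst, u⟫ = 0 := by
      have := hu (F.adjoint ⟨w.snd, hbmem⟩) ⟨⟨w.snd, hbmem⟩, rfl⟩
      rw [hbval, inner_neg_left] at this
      linear_combination -this
    rw [WithLp.prod_inner_apply]
    have h1 : z₀.fst = u := by rw [hz₀]; simp
    have h2 : z₀.snd = 0 := by rw [hz₀]; simp
    show ⟪w.fst, z₀.fst⟫ + ⟪w.snd, z₀.snd⟫ = 0
    rw [h1, h2, inner_zero_right, hfst, add_zero]
  have hgraph : (u, (0 : H₂)) ∈ F.graph := hz₀G
  rw [LinearPMap.mem_graph_iff] at hgraph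
  obtain ⟨y, hy1, hy2⟩ := hgraph
  have hy1' : (y : H₁) = u := hy1
  refine ⟨hy1' ▸ y.2, ?_⟩
  have : (⟨u, hy1' ▸ y.2⟩ : F.domain) = y := Subtype.ext hy1'.symm
  rw [this, hy2]

end Aux

/-- For a linear, closed, densely defined operator `F` between complex Hilbert spaces and a
fixed constant `C > 0`, the estimate `‖u‖ ≤ C‖Fu‖` on `Dom(F) ∩ closure(Range(F*))` holds
if and only if the estimate `‖v‖ ≤ C‖F*v‖` on `Dom(F*) ∩ closure(Range(F))` holds.
In particular the best constants in the two estimates agree. -/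
theorem stmt1 {H₁ H₂ : Type*} [NormedAddCommGroup H₁] [InnerProductSpace ℂ H₁]
    [NormedAddCommGroup H₂] [InnerProductSpace ℂ H₂] [CompleteSpace H₁] [CompleteSpace H₂]
    (F : H₁ →ₗ.[ℂ] H₂) (hdense : Dense (F.domain : Set H₁)) (hclosed : F.IsClosed)
    (C : ℝ) (hC : 0 < C) :
    (∀ u : F.domain,
        (u : H₁) ∈ closure (LinearMap.range F.adjoint.toFun : Set H₁) →
        ‖(u : H₁)‖ ≤ C * ‖F u‖) ↔
      (∀ v : F.adjoint.domain,
        (v : H₂) ∈ closure (LinearMap.range F.toFun : Set H₂) →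
        ‖(v : H₂)‖ ≤ C * ‖F.adjoint v‖) := by
  constructor
  · intro hF v hv
    apply closure_pairing (LinearMap.range F.toFun : Set H₂) _ hv (C * ‖F.adjoint v‖)
      (by positivity)
    rintro w ⟨x, rfl⟩
    -- decompose x into kernel part and part in closure of Range F*
    set K := (LinearMap.range F.adjoint.toFun).topologicalClosure with hK
    haveI : CompleteSpace K := (Submodule.isClosed_topologicalClosure _).completeSpace_coe
    set u₀ : H₁ := (x : H₁) - (K.orthogonalProjectionOnto (x : H₁) : H₁) with hu₀def
    have h₀ : u₀ ∈ Kᗮ := K.sub_starProjection_mem_orthogonal (x : H₁)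
    have hu₀ : ∀ w ∈ LinearMap.range F.adjoint.toFun, ⟪w, u₀⟫ = 0 := fun w hw =>
      (Submodule.mem_orthogonal K u₀).mp h₀ w
        ((LinearMap.range F.adjoint.toFun).le_topologicalClosure hw)
    obtain ⟨hmem, hval⟩ := hard_ker F hdense hclosed u₀ hu₀
    set x₁ : F.domain := x - ⟨u₀, hmem⟩ with hx₁def
    have hx₁coe : (x₁ : H₁) = (K.orthogonalProjectionOnto (x : H₁) : H₁) := by
      simp [hx₁def, hu₀def]
    have hx₁K : (x₁ : H₁) ∈ closure (LinearMap.range F.adjoint.toFun : Set H₁) := by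
      rw [hx₁coe, ← Submodule.topologicalClosure_coe]
      exact (K.orthogonalProjectionOnto (x : H₁)).2
    have hFx₁ : F x₁ = F x := by
      rw [hx₁def, LinearPMap.map_sub, hval, sub_zero]
    have hform := adjoint_isFormalAdjoint hdense v x₁
    calc RCLike.re ⟪(v : H₂), F x⟫ = RCLike.re ⟪(v : H₂), F x₁⟫ := by rw [hFx₁]
      _ = RCLike.re ⟪F.adjoint v, (x₁ : H₁)⟫ := by rw [hform]
      _ ≤ ‖⟪F.adjoint v, (x₁ : H₁)⟫‖ := RCLike.re_le_norm _
      _ ≤ ‖F.adjoint v‖ * ‖(x₁ : H₁)‖ := norm_inner_le_norm _ _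
      _ ≤ ‖F.adjoint v‖ * (C * ‖F x₁‖) :=
          mul_le_mul_of_nonneg_left (hF x₁ hx₁K) (norm_nonneg _)
      _ = C * ‖F.adjoint v‖ * ‖F x‖ := by rw [hFx₁]; ring
  · intro hA u hu
    apply closure_pairing (LinearMap.range F.adjoint.toFun : Set H₁) _ hu (C * ‖F u‖)
      (by positivity)
    rintro w ⟨v, rfl⟩
    set L := (LinearMap.range F.toFun).topologicalClosure with hL
    haveI : CompleteSpace L := (Submodule.isClosed_topologicalClosure _).completeSpace_coe
    set v₀ : H₂ := (v : H₂) - (L.orthogonalProjectionOnto (v : H₂) : H₂) with hv₀def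
    have h₀ : v₀ ∈ Lᗮ := L.sub_starProjection_mem_orthogonal (v : H₂)
    have hv₀ : ∀ x : F.domain, ⟪v₀, F x⟫ = 0 := by
      intro x
      have h1 : ⟪F x, v₀⟫ = 0 :=
        (Submodule.mem_orthogonal L v₀).mp h₀ _
          ((LinearMap.range F.toFun).le_topologicalClosure ⟨x, rfl⟩)
      rw [← inner_conj_symm, h1, _root_.map_zero]
    obtain ⟨hmem, hval⟩ := easy_ker F hdense v₀ hv₀
    set v₁ : F.adjoint.domain := v - ⟨v₀, hmem⟩ with hv₁def
    have hv₁coe : (v₁ : H₂) = (L.orthogonalProjectionOnto (v : H₂) : H₂) := by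
      simp [hv₁def, hv₀def]
    have hv₁L : (v₁ : H₂) ∈ closure (LinearMap.range F.toFun : Set H₂) := by
      rw [hv₁coe, ← Submodule.topologicalClosure_coe]
      exact (L.orthogonalProjectionOnto (v : H₂)).2
    have hAv₁ : F.adjoint v₁ = F.adjoint v := by
      rw [hv₁def, LinearPMap.map_sub, hval, sub_zero]
    have hform := adjoint_isFormalAdjoint hdense v₁ u
    calc RCLike.re ⟪(u : H₁), F.adjoint v⟫
        = RCLike.re ⟪(u : H₁), F.adjoint v₁⟫ := by rw [hAv₁]
      _ ≤ ‖⟪(u : H₁), F.adjoint v₁⟫‖ := RCLike.re_le_norm _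
      _ = ‖⟪F.adjoint v₁, (u : H₁)⟫‖ := (norm_inner_symm _ _).symm
      _ = ‖⟪(v₁ : H₂), F u⟫‖ := by rw [hform]
      _ ≤ ‖(v₁ : H₂)‖ * ‖F u‖ := norm_inner_le_norm _ _
      _ ≤ (C * ‖F.adjoint v₁‖) * ‖F u‖ :=
          mul_le_mul_of_nonneg_right (hA v₁ hv₁L) (norm_nonneg _)
      _ = C * ‖F u‖ * ‖F.adjoint v‖ := by rw [hAv₁]; ring
end

section
/- Let C > 0 and 0 < t₀ ≤ 1 be real numbers, and let 0 < t < t₀. Then there exists a constant C_t > 0, depending only on C, t₀ and t, with the following property: for all real numbers x, g, m with g ≥ 0 and m ≥ 0, if x + (1 − t₀)g ≥ 0 and x + g ≥ C·m, then t(x + (1 − t)g) ≥ C_t(m + g). (One may take C_t = t·min(Cε, (1−ε)t₀ − t) for any ε ∈ (0,1) with (1−ε)t₀ > t.) -/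
/-- The scalar inequality underlying Lemma 2.2: given `C > 0`, `0 < t₀ ≤ 1` and `0 < t < t₀`,
there is `C_t > 0` such that for all reals `g, m ≥ 0`, if
`x + (1 − t₀)g ≥ 0` and `x + g ≥ C·m`, then `t(x + (1 − t)g) ≥ C_t(m + g)`. -/
theorem stmt7 (C t₀ t : ℝ) (hC : 0 < C) (ht₀ : 0 < t₀) (ht₀' : t₀ ≤ 1)
    (ht : 0 < t) (htt₀ : t < t₀) :
    ∃ C_t > (0 : ℝ), ∀ x g m : ℝ, 0 ≤ g → 0 ≤ m →
      0 ≤ x + (1 - t₀) * g → C * m ≤ x + g →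
      C_t * (m + g) ≤ t * (x + (1 - t) * g) := by
  set ε : ℝ := (t₀ - t) / (2 * t₀) with hε
  have hε0 : 0 < ε := div_pos (by linarith) (by linarith)
  have hε1 : ε < 1 := by
    rw [hε, div_lt_one (by linarith)]
    linarith
  have hkey : (1 - ε) * t₀ - t = (t₀ - t) / 2 := by
    field_simp [hε]
    have h : ε * (2 * t₀) = t₀ - t := by rw [hε]; exact div_mul_cancel₀ _ (ne_of_gt (by linarith))
    linarith
  refine ⟨t * min (C * ε) ((1 - ε) * t₀ - t), ?_, ?_⟩
  · have h1 : 0 < C * ε := by positivity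
    have h2 : 0 < (1 - ε) * t₀ - t := by rw [hkey]; linarith
    exact mul_pos ht (lt_min h1 h2)
  · intro x g m hg hm h1 h2
    have hmin1 : min (C * ε) ((1 - ε) * t₀ - t) ≤ C * ε := min_le_left _ _
    have hmin2 : min (C * ε) ((1 - ε) * t₀ - t) ≤ (1 - ε) * t₀ - t := min_le_right _ _
    have hdecomp : x + (1 - t) * g =
        ε * (x + g) + (1 - ε) * (x + (1 - t₀) * g) + ((1 - ε) * t₀ - t) * g := by ring
    have hb1 : ε * (C * m) ≤ ε * (x + g) := by nlinarith
    have hb2 : 0 ≤ (1 - ε) * (x + (1 - t₀) * g) := by nlinarith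
    have hb3 : min (C * ε) ((1 - ε) * t₀ - t) * m ≤ ε * (C * m) := by nlinarith
    have hb4 : min (C * ε) ((1 - ε) * t₀ - t) * g ≤ ((1 - ε) * t₀ - t) * g := by nlinarith
    have : min (C * ε) ((1 - ε) * t₀ - t) * (m + g) ≤ x + (1 - t) * g := by
      rw [hdecomp]; nlinarith
    nlinarith
end
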